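/- Let a, b, c be nonzero squarefree pairwise coprime integers with exactly c even, c = 2c', and suppose c' ≡ 1 (mod 4) and (a, b) ≡ (1, 1) (mod 8). Then ax² + by² + cz² = 0 has no nonzero solution over ℚ₂. -/

import Mathlib

private lemma val_neg' {x : ℚ_[2]} : (-x).valuation = x.valuation := by
  rcases eq_or_ne x 0 with rfl | hx
  · simp
  · have hm1 : ((-1 : ℤ) : ℚ_[2]) = -1 := by push_cast; ring
    have h1 : (-x) = (-1 : ℚ_[2]) * x := by ring
    have hv1 : ((-1 : ℚ_[2])).valuation = 0 := by
      rw [← hm1, Padic.valuation_intCast]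
      simp [padicValInt]
    rw [h1, Padic.valuation_mul (by norm_num) hx, hv1, zero_add]

private lemma val_add_lt' {u w : ℚ_[2]} (hu : u ≠ 0) (hw : w ≠ 0)
    (h : u.valuation < w.valuation) : (u + w).valuation = u.valuation := by
  have hne : u + w ≠ 0 := by
    intro hcon
    have : u = -w := by linear_combination hcon
    rw [this, val_neg'] at h
    exact lt_irrefl _ h
  have h1 := Padic.le_valuation_add (p := 2) hne
  rw [min_eq_left h.le] at h1
  have h2 : u = (u + w) + (-w) := by ring
  have h3 := Padic.le_valuation_add (p := 2) (x := u + w) (y := -w) (by rw [← h2]; exact hu)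
  rw [← h2, val_neg'] at h3
  rcases min_le_iff.mp h3 with h4 | h4
  · exact le_antisymm h4 h1
  · omega

theorem stmt_13 (a b c c' : ℤ) (ha : a ≠ 0) (hb : b ≠ 0) (hc : c ≠ 0)
    (hoa : Odd a) (hob : Odd b) (hceq : c = 2 * c')
    (hsa : Squarefree a) (hsb : Squarefree b) (hsc : Squarefree c)
    (hab : IsCoprime a b) (hbc : IsCoprime b c) (hca : IsCoprime c a)
    (hc4 : c' % 4 = 1) (ha8 : a % 8 = 1) (hb8 : b % 8 = 1) :
    ¬ ∃ x y z : ℚ_[2], (x, y, z) ≠ (0, 0, 0) ∧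
      (a : ℚ_[2]) * x ^ 2 + (b : ℚ_[2]) * y ^ 2 + (c : ℚ_[2]) * z ^ 2 = 0 := by
  rintro ⟨x, y, z, hne, heq⟩
  have ha2 : (a : ℚ_[2]) ≠ 0 := Int.cast_ne_zero.mpr ha
  have hb2 : (b : ℚ_[2]) ≠ 0 := Int.cast_ne_zero.mpr hb
  have hc2 : (c : ℚ_[2]) ≠ 0 := Int.cast_ne_zero.mpr hc
  have hc'0 : c' ≠ 0 := by omega
  have hc'2 : ((c' : ℤ) : ℚ_[2]) ≠ 0 := Int.cast_ne_zero.mpr hc'0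
  have hda : ¬ ((2:ℕ) : ℤ) ∣ a := by
    rw [Int.dvd_iff_emod_eq_zero]; omega
  have hdb : ¬ ((2:ℕ) : ℤ) ∣ b := by
    rw [Int.dvd_iff_emod_eq_zero]; omega
  have hdc' : ¬ ((2:ℕ) : ℤ) ∣ c' := by
    rw [Int.dvd_iff_emod_eq_zero]; omega
  have va : ((a : ℤ) : ℚ_[2]).valuation = 0 := by
    rw [Padic.valuation_intCast, padicValInt.eq_zero_of_not_dvd hda]; rfl
  have vb : ((b : ℤ) : ℚ_[2]).valuation = 0 := by
    rw [Padic.valuation_intCast, padicValInt.eq_zero_of_not_dvd hdb]; rfl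
  have v2 : (2 : ℚ_[2]).valuation = 1 := by
    have := Padic.valuation_p (p := 2)
    simpa using this
  have vc : ((c : ℤ) : ℚ_[2]).valuation = 1 := by
    have hcast : ((c : ℤ) : ℚ_[2]) = (2 : ℚ_[2]) * ((c' : ℤ) : ℚ_[2]) := by
      rw [hceq]; push_cast; ring
    rw [hcast, Padic.valuation_mul (by norm_num) hc'2, v2,
      Padic.valuation_intCast, padicValInt.eq_zero_of_not_dvd hdc']
    rfl
  have vterm : ∀ (d : ℤ) (w : ℚ_[2]), ((d:ℚ_[2])) ≠ 0 → w ≠ 0 →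
      ((d : ℚ_[2]) * w ^ 2).valuation = ((d:ℚ_[2])).valuation + 2 * w.valuation := by
    intro d w hd hw
    rw [Padic.valuation_mul hd (pow_ne_zero 2 hw), sq,
      Padic.valuation_mul hw hw]
    ring
  -- parity helper: d * w^2 = -(c * t^2) is impossible for d of valuation 0
  have key2 : ∀ (d : ℤ) (w t : ℚ_[2]), ((d:ℚ_[2])).valuation = 0 → (d:ℚ_[2]) ≠ 0 →
      w ≠ 0 → t ≠ 0 → (d:ℚ_[2]) * w ^ 2 = -((c:ℚ_[2]) * t ^ 2) → False := by
    intro d w t hv hd hw ht hEq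
    have h1 : ((d:ℚ_[2]) * w ^ 2).valuation = 2 * w.valuation := by
      rw [vterm d w hd hw, hv]; ring
    have h2 : (-((c:ℚ_[2]) * t ^ 2)).valuation = 1 + 2 * t.valuation := by
      rw [val_neg', vterm c t hc2 ht, vc]
    rw [hEq, h2] at h1
    omega
  -- rule out x = 0 and y = 0
  have hx0 : x ≠ 0 := by
    intro hx; subst hx
    by_cases hy : y = 0
    · have hz : z = 0 := by
        subst hy
        have h0 : (c:ℚ_[2]) * z ^ 2 = 0 := by linear_combination heq
        rcases mul_eq_zero.mp h0 with h | h
        · exact absurd h hc2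
        · exact pow_eq_zero_iff (two_ne_zero) |>.mp h
      subst hy; subst hz; exact hne rfl
    · have hz : z ≠ 0 := by
        intro hz; subst hz
        have h0 : (b:ℚ_[2]) * y ^ 2 = 0 := by linear_combination heq
        rcases mul_eq_zero.mp h0 with h | h
        · exact hb2 h
        · exact hy (pow_eq_zero_iff (two_ne_zero) |>.mp h)
      exact key2 b y z vb hb2 hy hz (by linear_combination heq)
  have hy0 : y ≠ 0 := by
    intro hy; subst hy
    have hz : z ≠ 0 := by
      intro hz; subst hz
      have h0 : (a:ℚ_[2]) * x ^ 2 = 0 := by linear_combination heq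
      rcases mul_eq_zero.mp h0 with h | h
      · exact ha2 h
      · exact hx0 (pow_eq_zero_iff (two_ne_zero) |>.mp h)
    exact key2 a x z va ha2 hx0 hz (by linear_combination heq)
  -- main valuation analysis
  have hA : (a:ℚ_[2]) * x ^ 2 ≠ 0 := mul_ne_zero ha2 (pow_ne_zero 2 hx0)
  have hB : (b:ℚ_[2]) * y ^ 2 ≠ 0 := mul_ne_zero hb2 (pow_ne_zero 2 hy0)
  have vA : ((a:ℚ_[2]) * x ^ 2).valuation = 2 * x.valuation := by
    rw [vterm a x ha2 hx0, va]; ring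
  have vB : ((b:ℚ_[2]) * y ^ 2).valuation = 2 * y.valuation := by
    rw [vterm b y hb2 hy0, vb]; ring
  have hmain : x.valuation = y.valuation ∧ (z = 0 ∨ x.valuation ≤ z.valuation) := by
    by_cases hz : z = 0
    · subst hz
      have hAB : (a:ℚ_[2]) * x ^ 2 = -((b:ℚ_[2]) * y ^ 2) := by linear_combination heq
      have := congrArg Padic.valuation hAB
      rw [vA, val_neg', vB] at this
      exact ⟨by omega, Or.inl rfl⟩
    · have hC : (c:ℚ_[2]) * z ^ 2 ≠ 0 := mul_ne_zero hc2 (pow_ne_zero 2 hz)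
      have vC : ((c:ℚ_[2]) * z ^ 2).valuation = 1 + 2 * z.valuation := by
        rw [vterm c z hc2 hz, vc]
      have hABne : (a:ℚ_[2]) * x ^ 2 + (b:ℚ_[2]) * y ^ 2 ≠ 0 := by
        intro h
        exact hC (by linear_combination heq - h)
      have hABC : (a:ℚ_[2]) * x ^ 2 + (b:ℚ_[2]) * y ^ 2 = -((c:ℚ_[2]) * z ^ 2) := by
        linear_combination heq
      have hvxy : x.valuation = y.valuation := by
        rcases lt_trichotomy ((a:ℚ_[2]) * x ^ 2).valuation ((b:ℚ_[2]) * y ^ 2).valuation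
          with h | h | h
        · have h1 := val_add_lt' hA hB h
          rw [hABC, val_neg', vC, vA] at h1
          omega
        · rw [vA, vB] at h; omega
        · have h1 := val_add_lt' hB hA h
          rw [add_comm, hABC, val_neg', vC, vB] at h1
          omega
      have h2 := Padic.le_valuation_add (p := 2) hABne
      rw [hABC, val_neg', vC, vA, vB, ← hvxy] at h2
      simp only [min_self] at h2
      exact ⟨hvxy, Or.inr (by omega)⟩
  obtain ⟨hvxy, hvz⟩ := hmain
  -- scaling
  set m : ℤ := x.valuation with hm
  set s : ℚ_[2] := (2 : ℚ_[2]) ^ (-m) with hs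
  have hsne : s ≠ 0 := zpow_ne_zero _ two_ne_zero
  have hnorm_s : ‖s‖ = (2:ℝ) ^ m := by
    have := Padic.norm_p_zpow (p := 2) (-m)
    simp only [Nat.cast_ofNat, neg_neg] at this
    exact this
  have hnx : ‖x‖ = (2:ℝ) ^ (-m) := by
    rw [Padic.norm_eq_zpow_neg_valuation hx0]; norm_num; exact hm.symm
  have hny : ‖y‖ = (2:ℝ) ^ (-m) := by
    rw [Padic.norm_eq_zpow_neg_valuation hy0, ← hvxy]; norm_num
  have hX1 : ‖s * x‖ = 1 := by
    rw [norm_mul, hnorm_s, hnx, ← zpow_add₀ (two_ne_zero)]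
    simp
  have hY1 : ‖s * y‖ = 1 := by
    rw [norm_mul, hnorm_s, hny, ← zpow_add₀ (two_ne_zero)]
    simp
  have hZ1 : ‖s * z‖ ≤ 1 := by
    rcases eq_or_ne z 0 with rfl | hz0
    · simp
    · have hle : m ≤ z.valuation := by
        rcases hvz with h | h
        · exact absurd h hz0
        · exact h
      rw [norm_mul, hnorm_s, Padic.norm_eq_zpow_neg_valuation hz0]
      have : (2:ℝ) ^ m * ((2:ℕ):ℝ) ^ (-z.valuation) = (2:ℝ) ^ (m - z.valuation) := by
        push_cast
        rw [← zpow_add₀ (two_ne_zero)]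
        ring_nf
      rw [this]
      calc (2:ℝ) ^ (m - z.valuation) ≤ (2:ℝ) ^ (0:ℤ) :=
            zpow_le_zpow_right₀ (by norm_num) (by omega)
        _ = 1 := zpow_zero 2
  -- lift to ℤ_[2]
  set X : ℤ_[2] := ⟨s * x, le_of_eq hX1⟩ with hXdef
  set Y : ℤ_[2] := ⟨s * y, le_of_eq hY1⟩ with hYdef
  set Z : ℤ_[2] := ⟨s * z, hZ1⟩ with hZdef
  have cX : ((X : ℤ_[2]) : ℚ_[2]) = s * x := rfl
  have cY : ((Y : ℤ_[2]) : ℚ_[2]) = s * y := rfl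
  have cZ : ((Z : ℤ_[2]) : ℚ_[2]) = s * z := rfl
  have hEq2 : (a:ℚ_[2]) * (s*x)^2 + (b:ℚ_[2]) * (s*y)^2 + (c:ℚ_[2]) * (s*z)^2 = 0 := by
    linear_combination s ^ 2 * heq
  have hEqI : (a : ℤ_[2]) * X ^ 2 + (b : ℤ_[2]) * Y ^ 2 + (c : ℤ_[2]) * Z ^ 2 = 0 := by
    have h0 : (((a : ℤ_[2]) * X ^ 2 + (b : ℤ_[2]) * Y ^ 2 + (c : ℤ_[2]) * Z ^ 2 : ℤ_[2])
        : ℚ_[2]) = ((0 : ℤ_[2]) : ℚ_[2]) := by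
      push_cast
      exact hEq2
    exact (PadicInt.coe_eq_zero).mp (by rw [h0]; norm_cast)
  -- reduce mod 8
  set φ : ℤ_[2] →+* ZMod (2 ^ 3) := PadicInt.toZModPow 3 with hφ
  have hEqZ : ((a : ℤ) : ZMod (2^3)) * (φ X) ^ 2 + ((b : ℤ) : ZMod (2^3)) * (φ Y) ^ 2
      + ((c : ℤ) : ZMod (2^3)) * (φ Z) ^ 2 = 0 := by
    have := congrArg φ hEqI
    simpa only [map_add, map_mul, map_pow, map_intCast, map_zero] using this
  have hXu : IsUnit (φ X) := (PadicInt.isUnit_iff.mpr hX1).map φ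
  have hYu : IsUnit (φ Y) := (PadicInt.isUnit_iff.mpr hY1).map φ
  have haz : ((a : ℤ) : ZMod (2^3)) = 1 := by
    have h1 : ((a : ℤ) : ZMod (2^3)) = ((1 : ℤ) : ZMod (2^3)) :=
      (ZMod.intCast_eq_intCast_iff _ _ _).mpr (by
        show a % ((2^3 : ℕ) : ℤ) = 1 % ((2^3 : ℕ) : ℤ)
        push_cast
        omega)
    simpa using h1
  have hbz : ((b : ℤ) : ZMod (2^3)) = 1 := by
    have h1 : ((b : ℤ) : ZMod (2^3)) = ((1 : ℤ) : ZMod (2^3)) :=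
      (ZMod.intCast_eq_intCast_iff _ _ _).mpr (by
        show b % ((2^3 : ℕ) : ℤ) = 1 % ((2^3 : ℕ) : ℤ)
        push_cast
        omega)
    simpa using h1
  have hcz : ((c : ℤ) : ZMod (2^3)) = 2 := by
    have h1 : ((c : ℤ) : ZMod (2^3)) = ((2 : ℤ) : ZMod (2^3)) :=
      (ZMod.intCast_eq_intCast_iff _ _ _).mpr (by
        show c % ((2^3 : ℕ) : ℤ) = 2 % ((2^3 : ℕ) : ℤ)
        push_cast
        omega)
    simpa using h1
  rw [haz, hbz, hcz, one_mul, one_mul] at hEqZ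
  have final : ∀ u w t : ZMod (2^3), IsUnit u → IsUnit w →
      u ^ 2 + w ^ 2 + 2 * t ^ 2 ≠ 0 := by decide
  exact final _ _ _ hXu hYu hEqZ
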